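/- Let p, t, w ∈ ℂ and φ, l, s ∈ ℝ. Define M = [[−(1/4)p·w + (1/4)p̄·w̄, t·e^{−φ/2}·w + e^{φ/2}·w̄], [e^{φ/2}·w − t̄·e^{−φ/2}·w̄, (1/4)p·w − (1/4)p̄·w̄]] ∈ M₂(ℂ), Λ = diag(e^l, e^{−l}), and H_s = diag(s, −s). Then −det(Λ⁻¹·M·Λ + H_s + Mᴴ) = s² + 4·e^φ·|w|²·cosh²(l) + 4·|t|²·e^{−φ}·|w|²·sinh²(l) − 8·Re(t·w²)·cosh(l)·sinh(l), where Mᴴ is the conjugate transpose of M. -/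

import Mathlib

open Matrix Complex

/-- The value on a tangent vector w of the cosh-Gordon flat connection at λ = 1
(P·w + Q·w̄, with p standing for the value of ∂φ). -/
noncomputable def connVal (p t w : ℂ) (φ : ℝ) : Matrix (Fin 2) (Fin 2) ℂ :=
  !![-(1 / 4) * p * w + (1 / 4) * (starRingEnd ℂ) p * (starRingEnd ℂ) w,
       t * (Real.exp (-φ / 2) : ℝ) * w + ((Real.exp (φ / 2) : ℝ) : ℂ) * (starRingEnd ℂ) w;
     ((Real.exp (φ / 2) : ℝ) : ℂ) * w
       - (starRingEnd ℂ) t * (Real.exp (-φ / 2) : ℝ) * (starRingEnd ℂ) w,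
       (1 / 4) * p * w - (1 / 4) * (starRingEnd ℂ) p * (starRingEnd ℂ) w]

set_option maxHeartbeats 2000000 in
/-- The induced 3-dimensional metric on the tangent vector (w, s) at height l:
−det(Λ⁻¹MΛ + H_s + Mᴴ) = s² + 4e^φ|w|²cosh²l + 4|t|²e^{−φ}|w|²sinh²l − 8Re(tw²)cosh l sinh l. -/
theorem det_coshGordon_metric
    (p t w : ℂ) (φ l s : ℝ) :
    letI M : Matrix (Fin 2) (Fin 2) ℂ := connVal p t w φ
    letI Λ : Matrix (Fin 2) (Fin 2) ℂ :=
      !![((Real.exp l : ℝ) : ℂ), 0; 0, ((Real.exp (-l) : ℝ) : ℂ)]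
    letI Hs : Matrix (Fin 2) (Fin 2) ℂ := !![((s : ℝ) : ℂ), 0; 0, -((s : ℝ) : ℂ)]
    (-(Λ⁻¹ * M * Λ + Hs + Mᴴ).det
      = Complex.ofReal (s ^ 2 + 4 * Real.exp φ * ‖w‖ ^ 2 * Real.cosh l ^ 2
          + 4 * ‖t‖ ^ 2 * Real.exp (-φ) * ‖w‖ ^ 2 * Real.sinh l ^ 2
          - 8 * (t * w ^ 2).re * Real.cosh l * Real.sinh l)) := by
  have hΛinv : (!![((Real.exp l : ℝ) : ℂ), 0; 0, ((Real.exp (-l) : ℝ) : ℂ)])⁻¹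
      = !![((Real.exp (-l) : ℝ) : ℂ), 0; 0, ((Real.exp l : ℝ) : ℂ)] := by
    apply Matrix.inv_eq_right_inv
    ext i j
    fin_cases i <;> fin_cases j <;>
      simp [Matrix.mul_apply, Fin.sum_univ_two, ← Complex.ofReal_mul, ← Real.exp_add, ← Complex.exp_add, neg_add_cancel, add_neg_cancel, Complex.exp_zero]
  simp only [connVal, hΛinv]
  rw [Matrix.det_fin_two]
  simp only [Matrix.conjTranspose_apply, Matrix.mul_apply, Matrix.add_apply,
    Fin.sum_univ_two, Matrix.cons_val', Matrix.cons_val_zero, Matrix.cons_val_one,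
    Matrix.head_cons, Matrix.head_fin_const, Matrix.empty_val', Matrix.cons_val_fin_one,
    Matrix.of_apply, map_add, map_sub, _root_.map_mul, map_neg, map_div₀, _root_.map_one, map_ofNat,
    Complex.conj_conj, Complex.conj_ofReal]
  simp only [Complex.star_def, map_add, map_sub, _root_.map_mul, map_neg, map_div₀,
    map_ofNat, _root_.map_one, Complex.conj_conj, Complex.conj_ofReal]
  -- rewrite RHS real quantities
  have habsw : ((‖w‖ ^ 2 : ℝ) : ℂ) = w * (starRingEnd ℂ) w := by
    rw [Complex.sq_norm, Complex.mul_conj]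
  have habst : ((‖t‖ ^ 2 : ℝ) : ℂ) = t * (starRingEnd ℂ) t := by
    rw [Complex.sq_norm, Complex.mul_conj]
  have hre : (((t * w ^ 2).re : ℝ) : ℂ)
      = (t * w ^ 2 + (starRingEnd ℂ) t * ((starRingEnd ℂ) w) ^ 2) / 2 := by
    have h := Complex.add_conj (t * w ^ 2)
    simp only [_root_.map_mul, map_pow] at h
    push_cast at h ⊢
    linear_combination -h / 2
  have hcosh : Real.cosh l = (Real.exp l + Real.exp (-l)) / 2 := Real.cosh_eq l
  have hsinh : Real.sinh l = (Real.exp l - Real.exp (-l)) / 2 := Real.sinh_eq l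
  have hφ : Real.exp φ = Real.exp (φ / 2) * Real.exp (φ / 2) := by
    rw [← Real.exp_add]; ring_nf
  have hφn : Real.exp (-φ) = Real.exp (-(φ / 2)) * Real.exp (-(φ / 2)) := by
    rw [← Real.exp_add]; ring_nf
  have h2 : (-φ / 2 : ℝ) = -(φ / 2) := by ring
  have hEF : ((Real.exp l : ℝ) : ℂ) * ((Real.exp (-l) : ℝ) : ℂ) = 1 := by
    rw [← Complex.ofReal_mul, ← Real.exp_add]; simp
  have hAB : ((Real.exp (φ / 2) : ℝ) : ℂ) * ((Real.exp (-(φ / 2)) : ℝ) : ℂ) = 1 := by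
    rw [← Complex.ofReal_mul, ← Real.exp_add]; simp
  rw [hcosh, hsinh, hφ, hφn, h2]
  push_cast [-Complex.ofReal_exp, habsw, habst]
  rw [hre]
  linear_combination ((-1/16:ℂ) * (starRingEnd ℂ) p ^ 2 * (starRingEnd ℂ) w ^ 2 + (1/8:ℂ) * p * (starRingEnd ℂ) p * w * (starRingEnd ℂ) w + (-1/16:ℂ) * p ^ 2 * w ^ 2 + (1/2:ℂ) * ((s : ℝ) : ℂ) * (starRingEnd ℂ) p * (starRingEnd ℂ) w + (-1/2:ℂ) * ((s : ℝ) : ℂ) * p * w + ((Real.exp (-(φ / 2)) : ℝ) : ℂ) ^ 2 * t * (starRingEnd ℂ) t * w * (starRingEnd ℂ) w + (-1:ℂ) * ((Real.exp (φ / 2) : ℝ) : ℂ) * ((Real.exp (-(φ / 2)) : ℝ) : ℂ) * (starRingEnd ℂ) t * (starRingEnd ℂ) w ^ 2 + ((Real.exp (φ / 2) : ℝ) : ℂ) * ((Real.exp (-(φ / 2)) : ℝ) : ℂ) * t * w ^ 2 + (-1:ℂ) * ((Real.exp (φ / 2) : ℝ) : ℂ) ^ 2 * w * (starRingEnd ℂ)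 w + (1/16:ℂ) * ((Real.exp l : ℝ) : ℂ) * ((Real.exp (-l) : ℝ) : ℂ) * (starRingEnd ℂ) p ^ 2 * (starRingEnd ℂ) w ^ 2 + (-1/8:ℂ) * ((Real.exp l : ℝ) : ℂ) * ((Real.exp (-l) : ℝ) : ℂ) * p * (starRingEnd ℂ) p * w * (starRingEnd ℂ) w + (1/16:ℂ) * ((Real.exp l : ℝ) : ℂ) * ((Real.exp (-l) : ℝ) : ℂ) * p ^ 2 * w ^ 2 + (-1:ℂ) * ((Real.exp l : ℝ) : ℂ) * ((Real.exp (-l) : ℝ) : ℂ) * ((Real.exp (-(φ / 2)) : ℝ) : ℂ) ^ 2 * t * (starRingEnd ℂ) t * w * (starRingEnd ℂ) w + (-1:ℂ) * ((Real.exp l : ℝ) : ℂ) * ((Real.exp (-l) : ℝ) : ℂ) * ((Real.exp (φ / 2) : ℝ) : ℂ) * ((Real.exp (-(φ / 2)) : ℝ) : ℂ) * (starRingEnd ℂ) t * (starRingEnd ℂ) w ^ 2 + ((Real.exp l : ℝ) : ℂ) * ((Real.exp (-l) : ℝ) : ℂ) * ((Real.exp (φ / 2) : ℝ) : ℂ)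 * ((Real.exp (-(φ / 2)) : ℝ) : ℂ) * t * w ^ 2 + ((Real.exp l : ℝ) : ℂ) * ((Real.exp (-l) : ℝ) : ℂ) * ((Real.exp (φ / 2) : ℝ) : ℂ) ^ 2 * w * (starRingEnd ℂ) w) * hEF + (((Real.exp (-l) : ℝ) : ℂ) ^ 2 * (starRingEnd ℂ) t * (starRingEnd ℂ) w ^ 2 + ((Real.exp (-l) : ℝ) : ℂ) ^ 2 * t * w ^ 2 + (-1:ℂ) * ((Real.exp l : ℝ) : ℂ) ^ 2 * (starRingEnd ℂ) t * (starRingEnd ℂ) w ^ 2 + (-1:ℂ) * ((Real.exp l : ℝ) : ℂ) ^ 2 * t * w ^ 2) * hAB
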